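/- Let g : ℝ → ℝ be continuous with g(t) ≥ 0 for t ≥ 0, set G(t) := ∫₀ᵗ g(τ) dτ, assume G(1) > 0, and let 1 < g⁻ ≤ g⁺ be real constants satisfying g⁻·G(t) ≤ t·g(t) ≤ g⁺·G(t) for all t > 0. Define the complementary function G̃(s) := sup_{τ ≥ 0} (s·τ − G(τ)) for s ≥ 0 (this supremum is finite since G(τ) ≥ G(1)·τ^{g⁻} for τ ≥ 1). Then for every τ ≥ 1 and every s ≥ 0: τ^{g⁺/(g⁺−1)}·G̃(s) ≤ G̃(τ·s) ≤ τ^{g⁻/(g⁻−1)}·G̃(s). -/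

import Mathlib

private lemma ratio_mono' {G g : ℝ → ℝ} (hd : ∀ t : ℝ, HasDerivAt G (g t) t) {p : ℝ}
    (h : ∀ t : ℝ, 0 < t → p * G t ≤ t * g t) :
    MonotoneOn (fun t => G t * t ^ (-p)) (Set.Ioi (0:ℝ)) := by
  have key : ∀ x ∈ Set.Ioi (0:ℝ), HasDerivAt (fun t => G t * t ^ (-p))
      (g x * x ^ (-p) + G x * (-p * x ^ (-p - 1))) x := by
    intro x hx
    exact (hd x).mul (Real.hasDerivAt_rpow_const (Or.inl (ne_of_gt hx)))
  apply monotoneOn_of_deriv_nonneg (convex_Ioi 0)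
  · intro x hx; exact (key x hx).continuousAt.continuousWithinAt
  · rw [interior_Ioi]; intro x hx
    exact (key x hx).differentiableAt.differentiableWithinAt
  · rw [interior_Ioi]; intro x hx
    rw [(key x hx).deriv]
    have hxpos : (0:ℝ) < x := hx
    have h1 : x ^ (-p) = x * x ^ (-p - 1) := by
      have : x ^ (-p) = x ^ (1 + (-p - 1)) := by ring_nf
      rw [this, Real.rpow_add hxpos, Real.rpow_one]
    have h2 : g x * x ^ (-p) + G x * (-p * x ^ (-p - 1))
        = x ^ (-p - 1) * (x * g x - p * G x) := by rw [h1]; ring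
    rw [h2]
    exact mul_nonneg (Real.rpow_nonneg hxpos.le _) (sub_nonneg.2 (h x hx))

private lemma ratio_anti' {G g : ℝ → ℝ} (hd : ∀ t : ℝ, HasDerivAt G (g t) t) {p : ℝ}
    (h : ∀ t : ℝ, 0 < t → t * g t ≤ p * G t) :
    AntitoneOn (fun t => G t * t ^ (-p)) (Set.Ioi (0:ℝ)) := by
  have key : ∀ x ∈ Set.Ioi (0:ℝ), HasDerivAt (fun t => G t * t ^ (-p))
      (g x * x ^ (-p) + G x * (-p * x ^ (-p - 1))) x := by
    intro x hx
    exact (hd x).mul (Real.hasDerivAt_rpow_const (Or.inl (ne_of_gt hx)))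
  apply antitoneOn_of_deriv_nonpos (convex_Ioi 0)
  · intro x hx; exact (key x hx).continuousAt.continuousWithinAt
  · rw [interior_Ioi]; intro x hx
    exact (key x hx).differentiableAt.differentiableWithinAt
  · rw [interior_Ioi]; intro x hx
    rw [(key x hx).deriv]
    have hxpos : (0:ℝ) < x := hx
    have h1 : x ^ (-p) = x * x ^ (-p - 1) := by
      have : x ^ (-p) = x ^ (1 + (-p - 1)) := by ring_nf
      rw [this, Real.rpow_add hxpos, Real.rpow_one]
    have h2 : g x * x ^ (-p) + G x * (-p * x ^ (-p - 1))
        = x ^ (-p - 1) * (x * g x - p * G x) := by rw [h1]; ring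
    rw [h2]
    exact mul_nonpos_of_nonneg_of_nonpos (Real.rpow_nonneg hxpos.le _)
      (sub_nonpos.2 (h x hx))

/-- Scaling estimate for the Young conjugate `G̃` of an N-function `G` with indices
`1 < g⁻ ≤ g⁺`: for `τ ≥ 1` and `s ≥ 0`,
`τ^(g⁺/(g⁺-1)) * G̃ s ≤ G̃ (τ * s) ≤ τ^(g⁻/(g⁻-1)) * G̃ s`. -/
theorem conjugate_Nfunction_scaling_estimate
    (g : ℝ → ℝ) (hg : Continuous g) (hgnn : ∀ t : ℝ, 0 ≤ t → 0 ≤ g t)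
    (G : ℝ → ℝ) (hG : ∀ t : ℝ, G t = ∫ τ in (0 : ℝ)..t, g τ) (hG1 : 0 < G 1)
    (gm gp : ℝ) (hgm : 1 < gm) (hgmp : gm ≤ gp)
    (hineq : ∀ t : ℝ, 0 < t → gm * G t ≤ t * g t ∧ t * g t ≤ gp * G t)
    (Gt : ℝ → ℝ)
    (hGt : ∀ s : ℝ, Gt s = sSup ((fun τ => s * τ - G τ) '' Set.Ici (0 : ℝ))) :
    ∀ τ : ℝ, 1 ≤ τ → ∀ s : ℝ, 0 ≤ s →
      τ ^ (gp / (gp - 1)) * Gt s ≤ Gt (τ * s) ∧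
      Gt (τ * s) ≤ τ ^ (gm / (gm - 1)) * Gt s := by
  have hGfun : G = fun u => ∫ τ in (0:ℝ)..u, g τ := funext hG
  have hd : ∀ t : ℝ, HasDerivAt G (g t) t := by
    intro t
    rw [hGfun]
    exact intervalIntegral.integral_hasDerivAt_right (hg.intervalIntegrable 0 t)
      (hg.stronglyMeasurableAtFilter _ _) hg.continuousAt
  have G0 : G 0 = 0 := by rw [hG]; exact intervalIntegral.integral_same
  have Gnonneg : ∀ t : ℝ, 0 ≤ t → 0 ≤ G t := by
    intro t ht
    rw [hG]
    exact intervalIntegral.integral_nonneg ht (fun u hu => hgnn u hu.1)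
  have mono := ratio_mono' hd (fun t ht => (hineq t ht).1)
  have anti := ratio_anti' hd (fun t ht => (hineq t ht).2)
  have hgp1 : 1 < gp := lt_of_lt_of_le hgm hgmp
  -- scaling estimates for G
  have scale_low : ∀ l : ℝ, 1 ≤ l → ∀ t : ℝ, 0 ≤ t → l ^ gm * G t ≤ G (l * t) := by
    intro l hl t ht
    rcases eq_or_lt_of_le ht with h0 | htpos
    · rw [← h0, mul_zero, G0, mul_zero]
    · have hlpos : (0:ℝ) < l := by linarith
      have hlt : (0:ℝ) < l * t := mul_pos hlpos htpos
      have h3 := mono (Set.mem_Ioi.2 htpos) (Set.mem_Ioi.2 hlt)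
        (le_mul_of_one_le_left htpos.le hl)
      have h4 := mul_le_mul_of_nonneg_right h3 (Real.rpow_nonneg hlt.le gm)
      have e1 : (l*t) ^ (-gm) * (l*t) ^ gm = 1 := by
        rw [← Real.rpow_add hlt]; simp
      have e2 : t ^ (-gm) * t ^ gm = 1 := by
        rw [← Real.rpow_add htpos]; simp
      have e3 : (l*t) ^ gm = l ^ gm * t ^ gm := Real.mul_rpow hlpos.le htpos.le
      have lhs : G t * t ^ (-gm) * ((l*t) ^ gm) = l ^ gm * G t := by
        rw [e3]
        linear_combination (l ^ gm * G t) * e2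
      have rhs : G (l*t) * (l*t) ^ (-gm) * ((l*t) ^ gm) = G (l*t) := by
        linear_combination (G (l*t)) * e1
      simp only at h4
      linarith [h4, lhs, rhs]
  have scale_high : ∀ l : ℝ, 1 ≤ l → ∀ t : ℝ, 0 ≤ t → G (l * t) ≤ l ^ gp * G t := by
    intro l hl t ht
    rcases eq_or_lt_of_le ht with h0 | htpos
    · rw [← h0, mul_zero, G0, mul_zero]
    · have hlpos : (0:ℝ) < l := by linarith
      have hlt : (0:ℝ) < l * t := mul_pos hlpos htpos
      have h3 := anti (Set.mem_Ioi.2 htpos) (Set.mem_Ioi.2 hlt)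
        (le_mul_of_one_le_left htpos.le hl)
      have h4 := mul_le_mul_of_nonneg_right h3 (Real.rpow_nonneg hlt.le gp)
      have e1 : (l*t) ^ (-gp) * (l*t) ^ gp = 1 := by
        rw [← Real.rpow_add hlt]; simp
      have e2 : t ^ (-gp) * t ^ gp = 1 := by
        rw [← Real.rpow_add htpos]; simp
      have e3 : (l*t) ^ gp = l ^ gp * t ^ gp := Real.mul_rpow hlpos.le htpos.le
      have lhs : G t * t ^ (-gp) * ((l*t) ^ gp) = l ^ gp * G t := by
        rw [e3]
        linear_combination (l ^ gp * G t) * e2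
      have rhs : G (l*t) * (l*t) ^ (-gp) * ((l*t) ^ gp) = G (l*t) := by
        linear_combination (G (l*t)) * e1
      simp only at h4
      linarith [h4, lhs, rhs]
  -- the defining set is nonempty and bounded above
  have hmem0 : ∀ s : ℝ, (0:ℝ) ∈ (fun τ => s * τ - G τ) '' Set.Ici (0:ℝ) :=
    fun s => ⟨0, Set.mem_Ici.2 le_rfl, by simp [G0]⟩
  have hbdd : ∀ s : ℝ, 0 ≤ s → BddAbove ((fun τ => s * τ - G τ) '' Set.Ici (0:ℝ)) := by
    intro s hs
    set T : ℝ := max 1 (((s+1)/G 1) ^ (1/(gm-1))) with hT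
    have hT0 : (0:ℝ) ≤ T := le_trans zero_le_one (le_max_left _ _)
    refine ⟨s * T, ?_⟩
    rintro y ⟨u, hu, rfl⟩
    simp only
    rcases le_total u T with h | h
    · have hGu := Gnonneg u hu
      nlinarith
    · have hu1 : (1:ℝ) ≤ u := le_trans (le_max_left _ _) h
      have hupos : (0:ℝ) < u := by linarith
      have hG1u : u ^ gm * G 1 ≤ G u := by
        have := scale_low u hu1 1 zero_le_one
        rwa [mul_one] at this
      have hsplit : u ^ (gm-1) * u = u ^ gm := by
        have h' : u ^ gm = u ^ ((gm-1)+1) := by congr 1; ring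
        rw [h', Real.rpow_add hupos, Real.rpow_one]
      have hbase : (0:ℝ) ≤ (s+1)/G 1 := by positivity
      have h5 : ((s+1)/G 1) ^ (1/(gm-1)) ≤ u := le_trans (le_max_right _ _) h
      have h6 : (((s+1)/G 1) ^ (1/(gm-1))) ^ (gm-1) ≤ u ^ (gm-1) :=
        Real.rpow_le_rpow (Real.rpow_nonneg hbase _) h5 (by linarith)
      rw [← Real.rpow_mul hbase, one_div, inv_mul_cancel₀ (by linarith : gm - (1:ℝ) ≠ 0),
        Real.rpow_one] at h6
      have h7 : s + 1 ≤ G 1 * u ^ (gm-1) := by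
        rw [div_le_iff₀ hG1] at h6; linarith
      have h8 : (s+1)*u ≤ G 1 * u ^ (gm-1) * u := mul_le_mul_of_nonneg_right h7 hupos.le
      nlinarith [hsplit, hG1u, mul_nonneg hs hT0]
  have Gtnn : ∀ s : ℝ, 0 ≤ s → 0 ≤ Gt s := by
    intro s hs
    rw [hGt]
    exact le_csSup (hbdd s hs) (hmem0 s)
  intro τ hτ s hs
  have hτ0 : (0:ℝ) < τ := by linarith
  -- rpow identities
  have e1m : τ * τ ^ (1/(gm-1)) = τ ^ (gm/(gm-1)) := by
    have hm1 : gm - (1:ℝ) ≠ 0 := by linarith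
    have hm : gm/(gm-1) = (1:ℝ) + 1/(gm-1) := by field_simp; ring
    rw [hm, Real.rpow_add hτ0, Real.rpow_one]
  have e2m : (τ ^ (1/(gm-1))) ^ gm = τ ^ (gm/(gm-1)) := by
    rw [← Real.rpow_mul hτ0.le]; congr 1; field_simp
  have e1p : τ * τ ^ (1/(gp-1)) = τ ^ (gp/(gp-1)) := by
    have hm1 : gp - (1:ℝ) ≠ 0 := by linarith
    have hm : gp/(gp-1) = (1:ℝ) + 1/(gp-1) := by field_simp; ring
    rw [hm, Real.rpow_add hτ0, Real.rpow_one]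
  have e2p : (τ ^ (1/(gp-1))) ^ gp = τ ^ (gp/(gp-1)) := by
    rw [← Real.rpow_mul hτ0.le]; congr 1; field_simp
  have hτrm1 : (1:ℝ) ≤ τ ^ (1/(gm-1)) := by
    calc (1:ℝ) = (1:ℝ) ^ (1/(gm-1)) := (Real.one_rpow _).symm
    _ ≤ τ ^ (1/(gm-1)) := Real.rpow_le_rpow zero_le_one hτ (one_div_nonneg.2 (by linarith))
  have hτrp1 : (1:ℝ) ≤ τ ^ (1/(gp-1)) := by
    calc (1:ℝ) = (1:ℝ) ^ (1/(gp-1)) := (Real.one_rpow _).symm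
    _ ≤ τ ^ (1/(gp-1)) := Real.rpow_le_rpow zero_le_one hτ (one_div_nonneg.2 (by linarith))
  constructor
  · -- lower bound
    have hτq : (0:ℝ) < τ ^ (gp/(gp-1)) := Real.rpow_pos_of_pos hτ0 _
    rw [hGt s, ← le_div_iff₀' hτq]
    apply csSup_le ⟨0, hmem0 s⟩
    rintro y ⟨v, hv, rfl⟩
    simp only
    rw [le_div_iff₀' hτq]
    have hv' : (0:ℝ) ≤ v := hv
    set u := τ ^ (1/(gp-1)) * v with hudef
    have hu : (0:ℝ) ≤ u := mul_nonneg (Real.rpow_pos_of_pos hτ0 _).le hv'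
    have hmemu : τ * s * u - G u ≤ Gt (τ*s) := by
      rw [hGt]
      exact le_csSup (hbdd (τ*s) (mul_nonneg hτ0.le hs)) ⟨u, hu, rfl⟩
    have hGu : G u ≤ τ ^ (gp/(gp-1)) * G v := by
      rw [← e2p]; exact scale_high _ hτrp1 v hv'
    have hne : τ * s * u = τ ^ (gp/(gp-1)) * s * v := by
      rw [hudef, ← e1p]; ring
    nlinarith [hmemu, hGu, hne]
  · -- upper bound
    have hτq : (0:ℝ) ≤ τ ^ (gm/(gm-1)) := (Real.rpow_pos_of_pos hτ0 _).le
    rw [hGt (τ*s)]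
    apply csSup_le ⟨0, hmem0 (τ*s)⟩
    rintro y ⟨u, hu, rfl⟩
    simp only
    have hu' : (0:ℝ) ≤ u := hu
    have hτrpos : (0:ℝ) < τ ^ (1/(gm-1)) := Real.rpow_pos_of_pos hτ0 _
    set v := u / τ ^ (1/(gm-1)) with hvdef
    have hvnn : (0:ℝ) ≤ v := div_nonneg hu' hτrpos.le
    have huv : u = τ ^ (1/(gm-1)) * v := by
      rw [hvdef]; field_simp
    have hGuv : τ ^ (gm/(gm-1)) * G v ≤ G u := by
      rw [huv, ← e2m]; exact scale_low _ hτrm1 v hvnn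
    have hmemv : s * v - G v ≤ Gt s := by
      rw [hGt s]
      exact le_csSup (hbdd s hs) ⟨v, hvnn, rfl⟩
    have hne : τ * s * u = τ ^ (gm/(gm-1)) * s * v := by
      rw [huv, ← e1m]; ring
    nlinarith [mul_le_mul_of_nonneg_left hmemv hτq, hGuv, hne]
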